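/- arXiv:2004.06215 — 6 statements merged into one kernel-verified Lean document; each statement's English description precedes it below -/
import Mathlib

section
/- For any finite set S of M sites, any two fast quorums R₁, R₂ ⊆ S, and any classic quorum Q ⊆ S, the triple intersection R₁ ∩ R₂ ∩ Q is nonempty, provided M ≥ 1. -/
theorem two_fast_one_classic_intersect {α : Type*} [DecidableEq α]
    (S R₁ R₂ Q : Finset α) (hM : 1 ≤ S.card)
    (hR₁ : R₁ ⊆ S) (hR₂ : R₂ ⊆ S) (hQ : Q ⊆ S)
    (hr₁ : 4 * R₁.card ≥ 3 * S.card) (hr₂ : 4 * R₂.card ≥ 3 * S.card)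
    (hq : 2 * Q.card > S.card) :
    (R₁ ∩ R₂ ∩ Q).Nonempty := by
  have h1 : (R₁ ∪ R₂).card ≤ S.card :=
    Finset.card_le_card (Finset.union_subset hR₁ hR₂)
  have h2 := Finset.card_union_add_card_inter R₁ R₂
  have h3 : ((R₁ ∩ R₂) ∪ Q).card ≤ S.card :=
    Finset.card_le_card (Finset.union_subset ((Finset.inter_subset_left).trans hR₁) hQ)
  have h4 := Finset.card_union_add_card_inter (R₁ ∩ R₂) Q
  rw [← Finset.card_pos]
  omega
end

section
/- Let S be a finite set of M sites, R ⊆ S a fast quorum, and Q ⊆ S a classic quorum. Then |R ∩ Q| > |Q| / 2; that is, the sites of R form a strict majority within Q. -/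
theorem fast_quorum_majority_in_classic {α : Type*} [DecidableEq α]
    (S R Q : Finset α) (hM : 1 ≤ S.card)
    (hR : R ⊆ S) (hQ : Q ⊆ S)
    (hr : 4 * R.card ≥ 3 * S.card) (hq : 2 * Q.card > S.card) :
    2 * (R ∩ Q).card > Q.card := by
  have h1 : (R ∪ Q).card + (R ∩ Q).card = R.card + Q.card :=
    Finset.card_union_add_card_inter R Q
  have h2 : (R ∪ Q).card ≤ S.card :=
    Finset.card_le_card (Finset.union_subset hR hQ)
  omega
end

section
/- Let S be a finite set of M sites and Q ⊆ S a classic quorum of votes received by the leader, where each site in Q votes for exactly one entry. If a fast quorum R ⊆ S all voted for entry e (and the votes of sites in R ∩ Q agree with their votes in R), then e is the unique entry receiving strictly more votes within Q than any other entry; in particular the entry with the most votes in Q is e. -/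
theorem fast_quorum_entry_has_plurality {α E : Type*} [DecidableEq α] [DecidableEq E]
    (S R Q : Finset α) (v : α → E) (e : E) (hM : 1 ≤ S.card)
    (hR : R ⊆ S) (hQ : Q ⊆ S)
    (hr : 4 * R.card ≥ 3 * S.card) (hq : 2 * Q.card > S.card)
    (hv : ∀ x ∈ R, v x = e) :
    ∀ f : E, f ≠ e →
      (Q.filter fun x => v x = e).card > (Q.filter fun x => v x = f).card := by
  intro f hf
  have h1 : (Q ∩ R).card ≤ (Q.filter fun x => v x = e).card := by
    apply Finset.card_le_card
    intro x hx
    simp only [Finset.mem_inter] at hx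
    exact Finset.mem_filter.2 ⟨hx.1, hv x hx.2⟩
  have hunion : (Q ∪ R).card ≤ S.card := Finset.card_le_card (Finset.union_subset hQ hR)
  have hIU : (Q ∪ R).card + (Q ∩ R).card = Q.card + R.card :=
    Finset.card_union_add_card_inter Q R
  have h2 : (Q.filter fun x => v x = f).card ≤ (Q \ (Q ∩ R)).card := by
    apply Finset.card_le_card
    intro x hx
    simp only [Finset.mem_filter] at hx
    simp only [Finset.mem_sdiff, Finset.mem_inter]
    exact ⟨hx.1, fun h => hf (hx.2.symm.trans (hv x h.2))⟩
  have h3 : (Q \ (Q ∩ R)).card = Q.card - (Q ∩ R).card :=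
    Finset.card_sdiff_of_subset Finset.inter_subset_left
  have h4 : (Q ∩ R).card ≤ Q.card := Finset.card_le_card Finset.inter_subset_left
  omega
end

section
/- At most one entry can be 'chosen' at a given log index: if entry e is chosen (either a fast quorum of sites voted for e, or a classic quorum of sites has e leader-approved) and entry f is chosen by either condition, with each site holding at most one entry at the index, then e = f. -/
/-- Entry `e` is chosen at the index if a fast quorum holds it
or a classic quorum holds it (leader-approved). -/
def Chosen {α E : Type*} [DecidableEq α] (S : Finset α) (w : α → Option E) (e : E) : Prop :=
  (∃ R : Finset α, R ⊆ S ∧ 4 * R.card ≥ 3 * S.card ∧ ∀ x ∈ R, w x = some e) ∨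
  (∃ Q : Finset α, Q ⊆ S ∧ 2 * Q.card > S.card ∧ ∀ x ∈ Q, w x = some e)

lemma chosen_majority {α E : Type*} [DecidableEq α]
    (S : Finset α) (hM : 1 ≤ S.card) (w : α → Option E) (e : E)
    (he : Chosen S w e) :
    ∃ Q : Finset α, Q ⊆ S ∧ 2 * Q.card > S.card ∧ ∀ x ∈ Q, w x = some e := by
  rcases he with ⟨R, hRS, hR, hw⟩ | h
  · exact ⟨R, hRS, by omega, hw⟩
  · exact h

theorem chosen_unique {α E : Type*} [DecidableEq α]
    (S : Finset α) (hM : 1 ≤ S.card) (w : α → Option E) (e f : E)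
    (he : Chosen S w e) (hf : Chosen S w f) : e = f := by
  obtain ⟨Q1, hQ1S, hQ1, hw1⟩ := chosen_majority S hM w e he
  obtain ⟨Q2, hQ2S, hQ2, hw2⟩ := chosen_majority S hM w f hf
  have hcard : (Q1 ∪ Q2).card ≤ S.card :=
    Finset.card_le_card (Finset.union_subset hQ1S hQ2S)
  have hint : (Q1 ∩ Q2).Nonempty := by
    rw [← Finset.card_pos]
    have := Finset.card_union_add_card_inter Q1 Q2
    omega
  obtain ⟨x, hx⟩ := hint
  rw [Finset.mem_inter] at hx
  have := (hw1 x hx.1).symm.trans (hw2 x hx.2)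
  exact Option.some.inj this
end

section
/- Quorum intersection is preserved under single-site reconfiguration: let S be a finite set and let S' = S ∪ {a} for some a ∉ S (or S' = S \ {a} for a ∈ S). Then any classic quorum of S (size > |S|/2) and any classic quorum of S' (size > |S'|/2) intersect, provided |S| ≥ 1 and |S'| ≥ 1. -/
theorem reconfiguration_quorums_intersect {α : Type*} [DecidableEq α]
    (S S' Q Q' : Finset α)
    (hchg : (∃ a, a ∉ S ∧ S' = insert a S) ∨ (∃ a ∈ S, S' = S.erase a))
    (hS : 1 ≤ S.card) (hS' : 1 ≤ S'.card)
    (hQ : Q ⊆ S) (hQ' : Q' ⊆ S')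
    (hq : 2 * Q.card > S.card) (hq' : 2 * Q'.card > S'.card) :
    (Q ∩ Q').Nonempty := by
  by_contra h
  rw [Finset.not_nonempty_iff_eq_empty, ← Finset.disjoint_iff_inter_eq_empty] at h
  have hcard := Finset.card_union_of_disjoint h
  rcases hchg with ⟨a, ha, rfl⟩ | ⟨a, ha, rfl⟩
  · have h1 : Q ∪ Q' ⊆ insert a S :=
      Finset.union_subset (hQ.trans (Finset.subset_insert a S)) hQ'
    have h2 := Finset.card_le_card h1
    have h3 : (insert a S).card = S.card + 1 := Finset.card_insert_of_notMem ha
    omega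
  · have h1 : Q ∪ Q' ⊆ S :=
      Finset.union_subset hQ (hQ'.trans (Finset.erase_subset a S))
    have h2 := Finset.card_le_card h1
    have h3 : (S.erase a).card = S.card - 1 := Finset.card_erase_of_mem ha
    omega
end

section
/- A newly elected leader learns every chosen self-approved entry: if a fast quorum R voted for entry e at index i, and the new leader collected the self-approved entries of some classic quorum Q of sites (each site in R still holds e at index i), then among the collected votes at index i, e has a strict plurality, so a leader that picks the most-voted entry picks e. -/
theorem new_leader_learns_chosen_entry {α E : Type*} [DecidableEq α] [DecidableEq E]
    (S R Q : Finset α) (w : α → Option E) (e : E) (i : ℕ) (hM : 1 ≤ S.card)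
    (hR : R ⊆ S) (hQ : Q ⊆ S)
    (hr : 4 * R.card ≥ 3 * S.card) (hq : 2 * Q.card > S.card)
    (hw : ∀ x ∈ R, w x = some e) :
    ∀ f : E, f ≠ e →
      (Q.filter fun x => w x = some e).card > (Q.filter fun x => w x = some f).card := by
  intro f hf
  have h1 : Q ∩ R ⊆ Q.filter fun x => w x = some e := by
    intro x hx
    simp only [Finset.mem_inter] at hx
    exact Finset.mem_filter.2 ⟨hx.1, hw x hx.2⟩
  have h2 : (Q.filter fun x => w x = some f) ⊆ Q \ R := by
    intro x hx
    simp only [Finset.mem_filter] at hx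
    refine Finset.mem_sdiff.2 ⟨hx.1, fun hxR => ?_⟩
    have := hw x hxR
    rw [this] at hx
    exact hf (Option.some_injective _ hx.2.symm)
  have c1 := Finset.card_le_card h1
  have c2 := Finset.card_le_card h2
  have c3 : (Q ∩ R).card + (Q \ R).card = Q.card := Finset.card_inter_add_card_sdiff Q R
  have c4 : (Q ∪ R).card + (Q ∩ R).card = Q.card + R.card := Finset.card_union_add_card_inter Q R
  have c5 : (Q ∪ R).card ≤ S.card := Finset.card_le_card (Finset.union_subset hQ hR)
  have c6 : (Q ∩ R).card ≤ Q.card := Finset.card_le_card Finset.inter_subset_left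
  omega
end
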